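/- For walks with steps E=(1,0), W=(-1,0), NW=(-1,1), SE=(1,-1) confined to the quarter plane, the number of walks of length 2m ending on the x-axis equals the number of walks of length 2m ending on the y-axis, and both equal (2m)!(2m+2)! / (m!·(m+1)!^2·(m+2)!). -/

import Mathlib

/-- Number of quarter-plane walks of length `n` with steps in `S` ending on the `x`-axis. -/
noncomputable def qwalkXAxis (S : Set (ℤ × ℤ)) (n : ℕ) : ℕ :=
  Nat.card {w : Fin (n + 1) → ℤ × ℤ //
    w 0 = (0, 0) ∧
    (∀ i : Fin n, w i.succ - w i.castSucc ∈ S) ∧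
    (∀ i, 0 ≤ (w i).1 ∧ 0 ≤ (w i).2) ∧
    (w (Fin.last n)).2 = 0}

/-- Number of quarter-plane walks of length `n` with steps in `S` ending on the `y`-axis. -/
noncomputable def qwalkYAxis (S : Set (ℤ × ℤ)) (n : ℕ) : ℕ :=
  Nat.card {w : Fin (n + 1) → ℤ × ℤ //
    w 0 = (0, 0) ∧
    (∀ i : Fin n, w i.succ - w i.castSucc ∈ S) ∧
    (∀ i, 0 ≤ (w i).1 ∧ 0 ≤ (w i).2) ∧
    (w (Fin.last n)).1 = 0}

namespace GB

def cnt {n : ℕ} (g : Bool × Bool → Bool) (u : Fin n → Bool × Bool) (k : ℕ) : ℕ :=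
  ∑ i : Fin n, if i.val < k ∧ g (u i) = true then 1 else 0

lemma cnt_zero {n g} (u : Fin n → Bool × Bool) : cnt g u 0 = 0 := by simp [cnt]

lemma cnt_succ {n g} (u : Fin n → Bool × Bool) (j : ℕ) (hj : j < n) :
    cnt g u (j + 1) = cnt g u j + (if g (u ⟨j, hj⟩) = true then 1 else 0) := by
  unfold cnt
  have hterm : ∀ i : Fin n, (if i.val < j + 1 ∧ g (u i) = true then 1 else 0)
      = (if i.val < j ∧ g (u i) = true then 1 else 0)
        + (if i = ⟨j, hj⟩ ∧ g (u i) = true then 1 else 0) := by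
    intro i
    rcases eq_or_ne i (⟨j, hj⟩ : Fin n) with h | h
    · subst h; simp
    · have hne : i.val ≠ j := fun hc => h (Fin.ext hc)
      have hiff : i.val < j + 1 ↔ i.val < j := by omega
      simp [hiff, h]
  rw [Finset.sum_congr rfl (fun i _ => hterm i), Finset.sum_add_distrib]
  simp only [ite_and]
  rw [Finset.sum_ite_eq' Finset.univ (⟨j, hj⟩ : Fin n) (fun i => if g (u i) = true then 1 else 0)]
  simp

lemma cnt_of_le {n g} (u : Fin n → Bool × Bool) {k : ℕ} (h : n ≤ k) : cnt g u k = cnt g u n := by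
  unfold cnt
  refine Finset.sum_congr rfl fun i _ => ?_
  have h1 : i.val < k := lt_of_lt_of_le i.isLt h
  simp [h1, i.isLt]

lemma cnt_snoc {n g} (v : Fin n → Bool × Bool) (ε : Bool × Bool) (k : ℕ) :
    cnt g (Fin.snoc v ε) k = cnt g v k + (if n < k ∧ g ε = true then 1 else 0) := by
  unfold cnt
  rw [Fin.sum_univ_castSucc]
  simp [Fin.snoc]

lemma cnt_le {n g} (u : Fin n → Bool × Bool) (k : ℕ) : cnt g u k ≤ n := by
  calc cnt g u k ≤ ∑ _i : Fin n, 1 :=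
        Finset.sum_le_sum (fun i _ => by split <;> omega)
  _ = n := by simp

def Good (n : ℕ) (u : Fin n → Bool × Bool) : Prop :=
  ∀ k, k ≤ n → (k ≤ 2 * cnt Prod.snd u k ∧ cnt Prod.snd u k ≤ cnt Prod.fst u k)

instance (n : ℕ) : DecidablePred (Good n) := fun _ => Nat.decidableBallLE _ _

noncomputable def f (n k l : ℕ) : ℕ :=
  (Finset.univ.filter (fun u : Fin n → Bool × Bool =>
      Good n u ∧ cnt Prod.fst u n = k ∧ cnt Prod.snd u n = l)).card

lemma cnt_snoc_le {n g} (v : Fin n → Bool × Bool) (ε : Bool × Bool) {k : ℕ} (h : k ≤ n) :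
    cnt g (Fin.snoc v ε) k = cnt g v k := by
  rw [cnt_snoc]; simp [Nat.not_lt.mpr h]

lemma cnt_snoc_top {n g} (v : Fin n → Bool × Bool) (ε : Bool × Bool) :
    cnt g (Fin.snoc v ε) (n + 1) = cnt g v n + (if g ε = true then 1 else 0) := by
  rw [cnt_snoc, cnt_of_le v (Nat.le_succ n)]
  simp

lemma good_snoc {n} (v : Fin n → Bool × Bool) (ε : Bool × Bool)
    (hv : Good n v)
    (h1 : n + 1 ≤ 2 * cnt Prod.snd (Fin.snoc v ε) (n+1))
    (h2 : cnt Prod.snd (Fin.snoc v ε) (n+1) ≤ cnt Prod.fst (Fin.snoc v ε) (n+1)) :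
    Good (n+1) (Fin.snoc v ε) := by
  intro k hk
  rcases Nat.lt_or_ge k (n+1) with h | h
  · have hk' : k ≤ n := by omega
    rw [cnt_snoc_le v ε hk', cnt_snoc_le v ε hk']
    exact hv k hk'
  · have : k = n + 1 := by omega
    subst this; exact ⟨h1, h2⟩

lemma good_init {n} (v : Fin n → Bool × Bool) (ε : Bool × Bool)
    (h : Good (n+1) (Fin.snoc v ε)) : Good n v := by
  intro k hk
  have := h k (by omega)
  rwa [cnt_snoc_le v ε hk, cnt_snoc_le v ε hk] at this

lemma card_fiber (n k l : ℕ) (hk : 1 ≤ k) (hl : 1 ≤ l)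
    (hc1 : n + 1 ≤ 2 * l) (hc2 : l ≤ k) (ε : Bool × Bool) :
    (Finset.univ.filter (fun u : Fin (n+1) → Bool × Bool =>
      (Good (n+1) u ∧ cnt Prod.fst u (n+1) = k ∧ cnt Prod.snd u (n+1) = l)
        ∧ u (Fin.last n) = ε)).card
    = f n (k - if ε.1 = true then 1 else 0) (l - if ε.2 = true then 1 else 0) := by
  have he1 : (if ε.1 = true then 1 else 0) ≤ 1 := by split <;> omega
  have he2 : (if ε.2 = true then 1 else 0) ≤ 1 := by split <;> omega
  unfold f
  refine Finset.card_bij' (fun u _ => Fin.init u) (fun v _ => Fin.snoc v ε) ?_ ?_ ?_ ?_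
  · intro u hu
    simp only [Finset.mem_filter, Finset.mem_univ, true_and] at hu ⊢
    obtain ⟨⟨hg, hA, hB⟩, hlast⟩ := hu
    have hu' : u = Fin.snoc (Fin.init u) ε := by
      rw [← hlast]; exact (Fin.snoc_init_self u).symm
    rw [hu', cnt_snoc_top] at hA
    rw [hu', cnt_snoc_top] at hB
    rw [hu'] at hg
    refine ⟨good_init _ _ hg, ?_, ?_⟩
    · generalize (if ε.1 = true then 1 else 0) = t at hA ⊢; omega
    · generalize (if ε.2 = true then 1 else 0) = t at hB ⊢; omega
  · intro v hv
    simp only [Finset.mem_filter, Finset.mem_univ, true_and] at hv ⊢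
    obtain ⟨hg, hA, hB⟩ := hv
    have hA' : cnt Prod.fst (Fin.snoc v ε) (n+1) = k := by
      rw [cnt_snoc_top, hA]
      generalize (if ε.1 = true then 1 else 0) = t at he1 ⊢; omega
    have hB' : cnt Prod.snd (Fin.snoc v ε) (n+1) = l := by
      rw [cnt_snoc_top, hB]
      generalize (if ε.2 = true then 1 else 0) = t at he2 ⊢; omega
    exact ⟨⟨good_snoc v ε hg (by omega) (by omega), hA', hB'⟩, by simp⟩
  · intro u hu
    simp only [Finset.mem_filter] at hu
    have h2 := hu.2.2
    rw [← h2, Fin.snoc_init_self]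
  · intro v _
    rw [Fin.init_snoc]

lemma f_rec (n k l : ℕ) (hk : 1 ≤ k) (hl : 1 ≤ l) (hc1 : n + 1 ≤ 2 * l) (hc2 : l ≤ k) :
    f (n+1) k l = f n (k-1) (l-1) + f n (k-1) l + f n k (l-1) + f n k l := by
  unfold f
  rw [Finset.card_eq_sum_card_fiberwise
    (f := fun u : Fin (n+1) → Bool × Bool => u (Fin.last n)) (t := Finset.univ)
    (fun u _ => Finset.mem_univ _)]
  have : ∀ ε : Bool × Bool,
      (Finset.univ.filter (fun u : Fin (n+1) → Bool × Bool =>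
        (Good (n+1) u ∧ cnt Prod.fst u (n+1) = k ∧ cnt Prod.snd u (n+1) = l)
          ∧ u (Fin.last n) = ε)).card
      = f n (k - if ε.1 = true then 1 else 0) (l - if ε.2 = true then 1 else 0) :=
    card_fiber n k l hk hl hc1 hc2
  rw [Fintype.sum_prod_type]
  rw [Fintype.sum_bool]
  rw [Fintype.sum_bool, Fintype.sum_bool]
  simp only [Finset.filter_filter]
  rw [this (true, true), this (true, false), this (false, true), this (false, false)]
  norm_num
  unfold f
  omega


def c (n : ℕ) (j : ℤ) : ℤ := if 0 ≤ j then (n.choose j.toNat : ℤ) else 0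

def Gg (a : ℤ → ℤ) (k l : ℤ) : ℤ :=
  (a k - a (k+3)) * (a l - a (l+1)) - (a (l-1) - a (l+2)) * (a (k+1) - a (k+2))

def G (n : ℕ) (k l : ℤ) : ℤ := Gg (c n) k l

lemma c_nonneg_arg (n : ℕ) (j : ℤ) (h : 0 ≤ j) : c n j = (n.choose j.toNat : ℤ) := if_pos h

lemma c_zero_of_gt {n : ℕ} {j : ℤ} (h : (n : ℤ) < j) : c n j = 0 := by
  unfold c
  split
  · norm_num
    apply Nat.choose_eq_zero_of_lt
    omega
  · rfl

lemma c_pascal (n : ℕ) (j : ℤ) : c (n+1) j = c n j + c n (j-1) := by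
  rcases lt_trichotomy j 0 with h | h | h
  · rw [c, if_neg (by omega), c, if_neg (by omega), c, if_neg (by omega)]; ring
  · subst h
    rw [c, if_pos le_rfl, c, if_pos le_rfl, c, if_neg (by omega)]
    simp
  · have h0 : (0:ℤ) ≤ j := le_of_lt h
    have h1 : (0:ℤ) ≤ j - 1 := by omega
    rw [c_nonneg_arg _ _ h0, c_nonneg_arg _ _ h0, c_nonneg_arg _ _ h1]
    have ht : j.toNat = (j-1).toNat + 1 := by omega
    rw [ht, Nat.choose_succ_succ']
    push_cast; ring




lemma c_symm {n : ℕ} {j : ℤ} (h0 : 0 ≤ j) (hn : j ≤ n) : c n j = c n ((n : ℤ) - j) := by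
  rw [c_nonneg_arg _ _ h0, c_nonneg_arg _ _ (by omega)]
  have : ((n:ℤ) - j).toNat = n - j.toNat := by omega
  rw [this]
  exact_mod_cast (Nat.choose_symm (by omega)).symm

lemma wall_a {n : ℕ} {l : ℤ} (h : 2 * l = (n : ℤ) - 1) (k : ℤ) : G n k l = 0 := by
  have hl0 : 0 ≤ l := by omega
  have h1 : c n l = c n (l+1) := by
    have hll : l ≤ (n:ℤ) := by omega
    rw [c_symm (n := n) (j := l) hl0 hll]
    congr 1; omega
  have h2 : c n (l-1) = c n (l+2) := by
    rcases le_or_gt (l+2) (n:ℤ) with hle | hgt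
    · have h02 : (0:ℤ) ≤ l + 2 := by omega
      rw [c_symm (n := n) (j := l+2) h02 hle]
      congr 1; omega
    · -- n < l+2, with 2l = n-1 forces l = 0, n = 1
      have hl : l = 0 := by omega
      have hn : (n:ℤ) = 1 := by omega
      rw [c_zero_of_gt (n := n) (j := l+2) (by omega), c, if_neg (by omega)]
  unfold G Gg
  rw [← h1, ← h2]
  ring

lemma wall_b (n : ℕ) (l : ℤ) : G n (l-1) l = 0 := by
  unfold G Gg
  rw [show l-1+3 = l+2 by ring, show l-1+1 = l by ring, show l-1+2 = l+1 by ring]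
  ring

lemma G_pascal (n : ℕ) (k l : ℤ) :
    G (n+1) k l = G n (k-1) (l-1) + G n (k-1) l + G n k (l-1) + G n k l := by
  unfold G Gg
  rw [c_pascal, c_pascal, c_pascal, c_pascal, c_pascal, c_pascal, c_pascal, c_pascal]
  rw [show k+3-1 = k+2 by ring, show l+1-1 = l by ring, show l+2-1 = l+1 by ring,
    show k+1-1 = k by ring, show k+2-1 = k+1 by ring,
    show k-1+3 = k+2 by ring, show l-1+1 = l by ring, show l-1-1 = l-2 by ring,
    show l-1+2 = l+1 by ring, show k-1+1 = k by ring, show k-1+2 = k+1 by ring]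
  ring


lemma c_zero_n (j : ℤ) : c 0 j = if j = 0 then 1 else 0 := by
  rcases lt_trichotomy j 0 with h | h | h
  · rw [c, if_neg (by omega), if_neg (by omega)]
  · subst h; rw [c, if_pos le_rfl]; simp
  · rw [c_zero_of_gt (by exact_mod_cast h), if_neg (by omega)]

lemma G_zero (k l : ℕ) : G 0 (k:ℤ) (l:ℤ) = if k = 0 ∧ l = 0 then 1 else 0 := by
  unfold G Gg
  simp only [c_zero_n]
  split_ifs <;> push_cast <;> first | omega | norm_num <;> omega

lemma f_zero (k l : ℕ) : f 0 k l = if k = 0 ∧ l = 0 then 1 else 0 := by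
  unfold f
  rw [Finset.univ_unique, Finset.filter_singleton]
  have hg : Good 0 (default : Fin 0 → Bool × Bool) := by
    intro j hj
    interval_cases j
    simp [cnt]
  by_cases h : k = 0 ∧ l = 0
  · rw [if_pos ⟨hg, by simp [cnt, h.1], by simp [cnt, h.2]⟩, if_pos h, Finset.card_singleton]
  · rw [if_neg ?_, if_neg h, Finset.card_empty]
    rintro ⟨-, h1, h2⟩
    simp [cnt] at h1 h2
    exact h ⟨h1.symm, h2.symm⟩

lemma f_eq_zero_of_not_chamber {n k l : ℕ} (h : ¬(n ≤ 2 * l ∧ l ≤ k)) : f n k l = 0 := by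
  unfold f
  rw [Finset.card_eq_zero, Finset.filter_eq_empty_iff]
  rintro u - ⟨hgd, hA, hB⟩
  exact h (by rw [← hA, ← hB]; exact hgd n le_rfl)

lemma f_eq_zero_of_big {n k l : ℕ} (h : n < k) : f n k l = 0 := by
  unfold f
  rw [Finset.card_eq_zero, Finset.filter_eq_empty_iff]
  rintro u - ⟨hgd, hA, hB⟩
  have := cnt_le (g := Prod.fst) u n
  omega

theorem f_eq_G : ∀ n k l : ℕ, n ≤ 2*l → l ≤ k → (f n k l : ℤ) = G n (k:ℤ) (l:ℤ) := by
  intro n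
  induction n with
  | zero =>
    intro k l _ _
    rw [f_zero, G_zero]
    split <;> simp
  | succ n ih =>
    intro k l hc1 hc2
    have hl : 1 ≤ l := by omega
    have hk : 1 ≤ k := by omega
    rw [f_rec n k l hk hl hc1 hc2]
    push_cast
    have cast1 : ((k - 1 : ℕ) : ℤ) = (k:ℤ) - 1 := by omega
    have cast2 : ((l - 1 : ℕ) : ℤ) = (l:ℤ) - 1 := by omega
    have t4 : (f n k l : ℤ) = G n (k:ℤ) (l:ℤ) := ih k l (by omega) hc2
    have t3 : (f n k (l-1) : ℤ) = G n (k:ℤ) ((l:ℤ)-1) := by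
      rcases Nat.lt_or_ge n (2*(l-1)+1) with h | h
      · rw [ih k (l-1) (by omega) (by omega), cast2]
      · -- 2l = n+1 : wall a
        have h2l : 2 * l = n + 1 := by omega
        rw [f_eq_zero_of_not_chamber (by omega), wall_a (l := (l:ℤ)-1) (by push_cast; omega) _]
        simp
    have t2 : (f n (k-1) l : ℤ) = G n ((k:ℤ)-1) (l:ℤ) := by
      rcases Nat.lt_or_ge l k with h | h
      · rw [ih (k-1) l (by omega) (by omega), cast1]
      · -- k = l : wall b
        have hkl : k = l := by omega
        rw [f_eq_zero_of_not_chamber (by omega), hkl, wall_b n (l:ℤ)]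
        simp
    have t1 : (f n (k-1) (l-1) : ℤ) = G n ((k:ℤ)-1) ((l:ℤ)-1) := by
      rcases Nat.lt_or_ge n (2*(l-1)+1) with h | h
      · rw [ih (k-1) (l-1) (by omega) (by omega), cast1, cast2]
      · have h2l : 2 * l = n + 1 := by omega
        rw [f_eq_zero_of_not_chamber (by omega), wall_a (l := (l:ℤ)-1) (by push_cast; omega) _]
        simp
    rw [t1, t2, t3, t4, G_pascal]

noncomputable def X (n : ℕ) : ℕ :=
  (Finset.univ.filter (fun u : Fin n → Bool × Bool =>
    Good n u ∧ cnt Prod.fst u n = cnt Prod.snd u n)).card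

noncomputable def Y (n : ℕ) : ℕ :=
  (Finset.univ.filter (fun u : Fin n → Bool × Bool =>
    Good n u ∧ 2 * cnt Prod.snd u n = n)).card

lemma X_sum (n : ℕ) : X n = ∑ k ∈ Finset.range (n+1), f n k k := by
  unfold X f
  rw [Finset.card_eq_sum_card_fiberwise
    (f := fun u : Fin n → Bool × Bool => cnt Prod.fst u n) (t := Finset.range (n+1))
    (fun u _ => Finset.mem_range.mpr (Nat.lt_succ_of_le (cnt_le u n)))]
  refine Finset.sum_congr rfl fun k _ => ?_
  congr 1
  rw [Finset.filter_filter]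
  apply Finset.filter_congr
  intro u _
  constructor
  · rintro ⟨⟨hg, he⟩, hk⟩; exact ⟨hg, hk, by omega⟩
  · rintro ⟨hg, hk, hl⟩; exact ⟨⟨hg, by omega⟩, hk⟩

lemma Y_sum (m : ℕ) : Y (2*m) = ∑ k ∈ Finset.range (2*m+1), f (2*m) k m := by
  unfold Y f
  rw [Finset.card_eq_sum_card_fiberwise
    (f := fun u : Fin (2*m) → Bool × Bool => cnt Prod.fst u (2*m)) (t := Finset.range (2*m+1))
    (fun u _ => Finset.mem_range.mpr (Nat.lt_succ_of_le (cnt_le u (2*m))))]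
  refine Finset.sum_congr rfl fun k _ => ?_
  congr 1
  rw [Finset.filter_filter]
  apply Finset.filter_congr
  intro u _
  constructor
  · rintro ⟨⟨hg, he⟩, hk⟩; exact ⟨hg, hk, by omega⟩
  · rintro ⟨hg, hk, hl⟩; exact ⟨⟨hg, by omega⟩, hk⟩

lemma telescope (g : ℕ → ℤ) (a b : ℕ) (hab : a ≤ b) :
    ∑ k ∈ Finset.Ico a b, (g k - g (k+1)) = g a - g b := by
  induction b, hab using Nat.le_induction with
  | base => simp
  | succ b hab ih => rw [Finset.sum_Ico_succ_top hab, ih]; ring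

def Hd (n : ℕ) (x : ℤ) : ℤ :=
  c n x^2 + c n (x+1)^2 - c n x * c n (x+1) + c n (x-1) * c n (x+2)
    - c n (x-1) * c n (x+1) - c n x * c n (x+2)

lemma G_diag (n : ℕ) (x : ℤ) : G n x x = Hd n x - Hd n (x+1) := by
  unfold G Gg Hd
  rw [show (x:ℤ)+1+1 = x+2 by ring, show (x:ℤ)+1-1 = x by ring, show (x:ℤ)+1+2 = x+3 by ring]
  ring

lemma Hd_top (m : ℕ) : Hd (2*m) (2*(m:ℤ)+1) = 0 := by
  have h1 : c (2*m) (2*(m:ℤ)+1) = 0 := c_zero_of_gt (by push_cast; omega)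
  have h2 : c (2*m) (2*(m:ℤ)+1+1) = 0 := c_zero_of_gt (by push_cast; omega)
  have h3 : c (2*m) (2*(m:ℤ)+1+2) = 0 := c_zero_of_gt (by push_cast; omega)
  unfold Hd
  rw [h1, h2, h3]
  ring

lemma X_eq (m : ℕ) : (X (2*m) : ℤ) = Hd (2*m) (m:ℤ) := by
  rw [X_sum]
  push_cast
  rw [Finset.range_eq_Ico, ← Finset.sum_Ico_consecutive _ (Nat.zero_le m) (by omega : m ≤ 2*m+1)]
  have hz : ∑ k ∈ Finset.Ico 0 m, (f (2*m) k k : ℤ) = 0 := by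
    apply Finset.sum_eq_zero
    intro k hk
    rw [Finset.mem_Ico] at hk
    rw [f_eq_zero_of_not_chamber (by omega)]
    simp
  rw [hz, zero_add]
  have hG : ∀ k ∈ Finset.Ico m (2*m+1),
      (f (2*m) k k : ℤ) = (fun k : ℕ => Hd (2*m) (k:ℤ)) k - (fun k : ℕ => Hd (2*m) (k:ℤ)) (k+1) := by
    intro k hk
    rw [Finset.mem_Ico] at hk
    rw [f_eq_G (2*m) k k (by omega) le_rfl, G_diag]
    push_cast
    ring_nf
  rw [Finset.sum_congr rfl hG, telescope _ _ _ (by omega)]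
  have : ((2*m+1 : ℕ) : ℤ) = 2*(m:ℤ)+1 := by push_cast; ring
  rw [this, Hd_top]
  ring

def Vy (n : ℕ) (mi : ℤ) (x : ℤ) : ℤ :=
  (c n x + c n (x+1) + c n (x+2)) * (c n mi - c n (mi+1))
    - (c n (mi-1) - c n (mi+2)) * c n (x+1)

lemma G_row (n : ℕ) (mi x : ℤ) : G n x mi = Vy n mi x - Vy n mi (x+1) := by
  unfold G Gg Vy
  rw [show (x:ℤ)+1+1 = x+2 by ring, show (x:ℤ)+1+2 = x+3 by ring]
  ring

lemma Vy_top (m : ℕ) (mi : ℤ) : Vy (2*m) mi (2*(m:ℤ)+1) = 0 := by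
  have h1 : c (2*m) (2*(m:ℤ)+1) = 0 := c_zero_of_gt (by push_cast; omega)
  have h2 : c (2*m) (2*(m:ℤ)+1+1) = 0 := c_zero_of_gt (by push_cast; omega)
  have h3 : c (2*m) (2*(m:ℤ)+1+2) = 0 := c_zero_of_gt (by push_cast; omega)
  unfold Vy
  rw [h1, h2, h3]
  ring

lemma Y_eq (m : ℕ) : (Y (2*m) : ℤ) = Vy (2*m) (m:ℤ) (m:ℤ) := by
  rw [Y_sum]
  push_cast
  rw [Finset.range_eq_Ico, ← Finset.sum_Ico_consecutive _ (Nat.zero_le m) (by omega : m ≤ 2*m+1)]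
  have hz : ∑ k ∈ Finset.Ico 0 m, (f (2*m) k m : ℤ) = 0 := by
    apply Finset.sum_eq_zero
    intro k hk
    rw [Finset.mem_Ico] at hk
    rw [f_eq_zero_of_not_chamber (by omega)]
    simp
  rw [hz, zero_add]
  have hG : ∀ k ∈ Finset.Ico m (2*m+1),
      (f (2*m) k m : ℤ) = (fun k : ℕ => Vy (2*m) (m:ℤ) (k:ℤ)) k
        - (fun k : ℕ => Vy (2*m) (m:ℤ) (k:ℤ)) (k+1) := by
    intro k hk
    rw [Finset.mem_Ico] at hk
    rw [f_eq_G (2*m) k m (by omega) (by omega), G_row]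
    push_cast
    ring_nf
  rw [Finset.sum_congr rfl hG, telescope _ _ _ (by omega)]
  have : ((2*m+1 : ℕ) : ℤ) = 2*(m:ℤ)+1 := by push_cast; ring
  rw [this, Vy_top]
  ring

lemma c_natCast (n j : ℕ) : c n (j:ℤ) = (n.choose j : ℤ) := by
  rw [c_nonneg_arg _ _ (by positivity)]
  simp

lemma hr0 (m : ℕ) : c (2*m) ((m:ℤ)-1) = c (2*m) ((m:ℤ)+1) := by
  rcases Nat.eq_zero_or_pos m with h | h
  · subst h
    rw [c, if_neg (by norm_num)]
    rw [show ((0:ℕ):ℤ)+1 = ((1:ℕ):ℤ) by norm_num, c_natCast]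
    simp
  · rw [c_symm (n := 2*m) (j := (m:ℤ)-1) (by omega) (by push_cast; omega)]
    congr 1
    push_cast
    ring

lemma hr1 (m : ℕ) : c (2*m) ((m:ℤ)+1) * ((m:ℤ)+1) = c (2*m) (m:ℤ) * (m:ℤ) := by
  have h := Nat.choose_succ_right_eq (2*m) m
  rw [show (m:ℤ)+1 = ((m+1:ℕ):ℤ) by push_cast; ring, c_natCast, c_natCast]
  have h2 : 2*m - m = m := by omega
  rw [h2] at h
  exact_mod_cast h

lemma hr2 (m : ℕ) : c (2*m) ((m:ℤ)+2) * ((m:ℤ)+2) = c (2*m) ((m:ℤ)+1) * ((m:ℤ)-1) := by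
  rcases Nat.eq_zero_or_pos m with h | h
  · subst h
    rw [show ((0:ℕ):ℤ)+2 = ((2:ℕ):ℤ) by norm_num, show ((0:ℕ):ℤ)+1 = ((1:ℕ):ℤ) by norm_num,
      c_natCast, c_natCast]
    simp
  · have hh := Nat.choose_succ_right_eq (2*m) (m+1)
    have h2 : 2*m - (m+1) = m - 1 := by omega
    rw [h2] at hh
    rw [show (m:ℤ)+2 = ((m+2:ℕ):ℤ) by push_cast; ring, show (m:ℤ)+1 = ((m+1:ℕ):ℤ) by push_cast; ring,
      c_natCast, c_natCast, show (m:ℤ)-1 = ((m-1:ℕ):ℤ) by omega]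
    exact_mod_cast hh

lemma alg1 (m : ℕ) : Hd (2*m) (m:ℤ) = Vy (2*m) (m:ℤ) (m:ℤ) := by
  unfold Hd Vy
  rw [hr0]
  linear_combination (c (2*m) ((m:ℤ)+1) - c (2*m) ((m:ℤ)+2)) * hr1 m
    + (c (2*m) ((m:ℤ)+1) - c (2*m) (m:ℤ)) * hr2 m

lemma ha_fact (m : ℕ) : c (2*m) (m:ℤ) * m.factorial * m.factorial = ((2*m).factorial : ℤ) := by
  rw [c_natCast]
  have h := Nat.choose_mul_factorial_mul_factorial (show m ≤ 2*m by omega)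
  have h2 : 2*m - m = m := by omega
  rw [h2] at h
  exact_mod_cast h

lemma alg2 (m : ℕ) :
    ((Hd (2*m) (m:ℤ) : ℤ) : ℚ) * (m.factorial * (m+1).factorial^2 * (m+2).factorial)
      = (2*m).factorial * (2*m+2).factorial := by
  have hmq1 : ((m:ℚ)+1) ≠ 0 := by positivity
  have hmq2 : ((m:ℚ)+2) ≠ 0 := by positivity
  -- cast the basic relations to ℚ
  have h0 : ((c (2*m) ((m:ℤ)-1) : ℤ) : ℚ) = ((c (2*m) ((m:ℤ)+1) : ℤ) : ℚ) := by
    exact_mod_cast congrArg (fun z : ℤ => (z : ℚ)) (hr0 m)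
  have h1 : ((c (2*m) ((m:ℤ)+1) : ℤ) : ℚ) * ((m:ℚ)+1) = ((c (2*m) (m:ℤ) : ℤ) : ℚ) * (m:ℚ) := by
    exact_mod_cast congrArg (fun z : ℤ => (z : ℚ)) (hr1 m)
  have h2 : ((c (2*m) ((m:ℤ)+2) : ℤ) : ℚ) * ((m:ℚ)+2)
      = ((c (2*m) ((m:ℤ)+1) : ℤ) : ℚ) * ((m:ℚ)-1) := by
    exact_mod_cast congrArg (fun z : ℤ => (z : ℚ)) (hr2 m)
  have ha : ((c (2*m) (m:ℤ) : ℤ) : ℚ) * m.factorial * m.factorial = ((2*m).factorial : ℚ) := by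
    exact_mod_cast congrArg (fun z : ℤ => (z : ℚ)) (ha_fact m)
  set A := ((c (2*m) (m:ℤ) : ℤ) : ℚ) with hA
  set B := ((c (2*m) ((m:ℤ)+1) : ℤ) : ℚ) with hB
  set D := ((c (2*m) ((m:ℤ)+2) : ℤ) : ℚ) with hD
  have hbq : B = A * m / ((m:ℚ)+1) := by field_simp; linarith [h1]
  have hdq : D = B * ((m:ℚ)-1) / ((m:ℚ)+2) := by field_simp; linarith [h2]
  have e1 : (m+1).factorial = (m+1) * m.factorial := Nat.factorial_succ m
  have e2 : (m+2).factorial = (m+2) * ((m+1) * m.factorial) := by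
    rw [Nat.factorial_succ, e1]
  have e3 : (2*m+2).factorial = (2*m+2) * ((2*m+1) * (2*m).factorial) := by
    rw [show 2*m+2 = (2*m+1)+1 by ring, Nat.factorial_succ, Nat.factorial_succ]
  rw [e1, e2, e3]
  unfold Hd
  push_cast
  rw [← hA, ← hB, ← hD, h0, hdq, hbq, ← ha]
  field_simp
  ring

theorem X_eq_Y (m : ℕ) : X (2*m) = Y (2*m) := by
  have h : (X (2*m) : ℤ) = (Y (2*m) : ℤ) := by rw [X_eq, Y_eq, alg1]
  exact_mod_cast h

theorem X_mul (m : ℕ) :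
    X (2*m) * (m.factorial * (m+1).factorial^2 * (m+2).factorial)
      = (2*m).factorial * (2*m+2).factorial := by
  have hx : ((X (2*m) : ℕ) : ℚ) = ((Hd (2*m) (m:ℤ) : ℤ) : ℚ) := by
    exact_mod_cast congrArg (fun z : ℤ => (z : ℚ)) (X_eq m)
  have h := alg2 m
  rw [← hx] at h
  exact_mod_cast h

def stp (ε : Bool × Bool) : ℤ × ℤ :=
  (if ε.2 then 1 else -1, if ε.1 = ε.2 then 0 else if ε.1 then 1 else -1)

def pos {n : ℕ} (u : Fin n → Bool × Bool) (i : Fin (n+1)) : ℤ × ℤ :=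
  (2 * (cnt Prod.snd u i.val : ℤ) - i.val,
    (cnt Prod.fst u i.val : ℤ) - (cnt Prod.snd u i.val : ℤ))

lemma pos_zero {n} (u : Fin n → Bool × Bool) : pos u 0 = (0, 0) := by
  simp [pos, cnt_zero]

lemma pos_step {n} (u : Fin n → Bool × Bool) (i : Fin n) :
    pos u i.succ - pos u i.castSucc = stp (u i) := by
  have hs : (i.succ : Fin (n+1)).val = i.val + 1 := rfl
  have hc : (i.castSucc : Fin (n+1)).val = i.val := rfl
  have e1 := cnt_succ (g := Prod.fst) u i.val i.isLt
  have e2 := cnt_succ (g := Prod.snd) u i.val i.isLt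
  have : (⟨i.val, i.isLt⟩ : Fin n) = i := by exact Fin.eta i i.isLt
  rw [this] at e1 e2
  unfold pos stp
  rw [Prod.mk_sub_mk, Prod.mk.injEq, hs, hc, e1, e2]
  rcases hu : u i with ⟨b1, b2⟩
  cases b1 <;> cases b2 <;> norm_num <;> push_cast <;> ring

def decode {n : ℕ} (w : Fin (n+1) → ℤ × ℤ) (i : Fin n) : Bool × Bool :=
  (decide ((w i.castSucc).1 + 2*(w i.castSucc).2 < (w i.succ).1 + 2*(w i.succ).2),
   decide ((w i.castSucc).1 < (w i.succ).1))

lemma decode_pos {n} (u : Fin n → Bool × Bool) : decode (pos u) = u := by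
  funext i
  have hs : (i.succ : Fin (n+1)).val = i.val + 1 := rfl
  have hc : (i.castSucc : Fin (n+1)).val = i.val := rfl
  have e1 := cnt_succ (g := Prod.fst) u i.val i.isLt
  have e2 := cnt_succ (g := Prod.snd) u i.val i.isLt
  have : (⟨i.val, i.isLt⟩ : Fin n) = i := by exact Fin.eta i i.isLt
  rw [this] at e1 e2
  unfold decode pos
  rw [hs, hc, e1, e2]
  rcases hu : u i with ⟨b1, b2⟩
  cases b1 <;> cases b2 <;> simp <;> push_cast <;> omega

lemma pos_decode {n : ℕ} (w : Fin (n+1) → ℤ × ℤ) (h0 : w 0 = (0, 0))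
    (hw : ∀ i : Fin n, w i.succ - w i.castSucc ∈
      ({((1:ℤ),(0:ℤ)), (-1,0), (-1,1), (1,-1)} : Set (ℤ × ℤ))) :
    pos (decode w) = w := by
  have claim : ∀ j (hj : j ≤ n), pos (decode w) ⟨j, Nat.lt_succ_of_le hj⟩ = w ⟨j, Nat.lt_succ_of_le hj⟩ := by
    intro j
    induction j with
    | zero =>
      intro hj
      have : (⟨0, Nat.lt_succ_of_le hj⟩ : Fin (n+1)) = 0 := rfl
      rw [this, pos_zero, h0]
    | succ j ih =>
      intro hj
      have hj' : j < n := hj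
      have hjn : j ≤ n := by omega
      set i0 : Fin n := ⟨j, hj'⟩ with hi0
      have hcast : i0.castSucc = (⟨j, Nat.lt_succ_of_le hjn⟩ : Fin (n+1)) := rfl
      have hsucc : i0.succ = (⟨j+1, Nat.lt_succ_of_le hj⟩ : Fin (n+1)) := rfl
      have ihj := ih hjn
      have hx : 2 * (cnt Prod.snd (decode w) j : ℤ) - j = (w i0.castSucc).1 := by
        rw [hcast, ← ihj]; rfl
      have hy : (cnt Prod.fst (decode w) j : ℤ) - (cnt Prod.snd (decode w) j : ℤ)
          = (w i0.castSucc).2 := by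
        rw [hcast, ← ihj]; rfl
      have step := hw i0
      simp only [Set.mem_insert_iff, Set.mem_singleton_iff] at step
      have e1 := cnt_succ (g := Prod.fst) (decode w) j hj'
      have e2 := cnt_succ (g := Prod.snd) (decode w) j hj'
      have heta : (⟨j, hj'⟩ : Fin n) = i0 := rfl
      rw [heta] at e1 e2
      have hposj1 : pos (decode w) ⟨j+1, Nat.lt_succ_of_le hj⟩
          = (2 * (cnt Prod.snd (decode w) (j+1) : ℤ) - (j+1),
             (cnt Prod.fst (decode w) (j+1) : ℤ) - (cnt Prod.snd (decode w) (j+1) : ℤ)) := rfl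
      have hwsub : w ⟨j+1, Nat.lt_succ_of_le hj⟩ = w i0.castSucc + (w i0.succ - w i0.castSucc) := by
        rw [hsucc]; ring
      rcases step with h | h | h | h <;>
      · rw [h] at hwsub
        have hd : decode w i0 = (decide ((w i0.castSucc).1 + 2*(w i0.castSucc).2
            < (w i0.succ).1 + 2*(w i0.succ).2), decide ((w i0.castSucc).1 < (w i0.succ).1)) := rfl
        have hdiff : w i0.succ = w i0.castSucc + (w i0.succ - w i0.castSucc) := by ring
        rw [h] at hdiff
        rw [hposj1, e2, e1, hwsub, hd, hdiff]
        rw [Prod.ext_iff]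
        constructor <;>
        · simp only [Prod.fst_add, Prod.snd_add]
          norm_num
          push_cast
          omega
  funext i
  have : i = ⟨i.val, i.isLt⟩ := rfl
  rw [this]
  exact claim i.val (by omega)


lemma stp_mem (ε : Bool × Bool) :
    stp ε ∈ ({((1:ℤ),(0:ℤ)), (-1,0), (-1,1), (1,-1)} : Set (ℤ × ℤ)) := by
  rcases ε with ⟨b1, b2⟩
  cases b1 <;> cases b2 <;> simp [stp]

lemma qwalkX_eq (n : ℕ) :
    Nat.card {w : Fin (n + 1) → ℤ × ℤ //
      w 0 = (0, 0) ∧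
      (∀ i : Fin n, w i.succ - w i.castSucc ∈
        ({((1:ℤ),(0:ℤ)), (-1,0), (-1,1), (1,-1)} : Set (ℤ × ℤ))) ∧
      (∀ i, 0 ≤ (w i).1 ∧ 0 ≤ (w i).2) ∧
      (w (Fin.last n)).2 = 0} = X n := by
  have E : {u : Fin n → Bool × Bool // Good n u ∧ cnt Prod.fst u n = cnt Prod.snd u n} ≃
      {w : Fin (n + 1) → ℤ × ℤ //
      w 0 = (0, 0) ∧
      (∀ i : Fin n, w i.succ - w i.castSucc ∈
        ({((1:ℤ),(0:ℤ)), (-1,0), (-1,1), (1,-1)} : Set (ℤ × ℤ))) ∧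
      (∀ i, 0 ≤ (w i).1 ∧ 0 ≤ (w i).2) ∧
      (w (Fin.last n)).2 = 0} := by
    refine ⟨fun u => ⟨pos u.val, pos_zero u.val, fun i => by rw [pos_step]; exact stp_mem _,
        fun i => ?_, ?_⟩,
      fun w => ⟨decode w.val, ?_, ?_⟩, fun u => Subtype.ext (decode_pos u.val),
      fun w => Subtype.ext (pos_decode w.val w.prop.1 w.prop.2.1)⟩
    · have h := u.prop.1 i.val (by omega : i.val ≤ n)
      show (0:ℤ) ≤ 2 * (cnt Prod.snd u.val i.val : ℤ) - i.val ∧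
        (0:ℤ) ≤ (cnt Prod.fst u.val i.val : ℤ) - (cnt Prod.snd u.val i.val : ℤ)
      push_cast
      omega
    · have h := u.prop.2
      show (cnt Prod.fst u.val (Fin.last n).val : ℤ) - (cnt Prod.snd u.val (Fin.last n).val : ℤ) = 0
      have : (Fin.last n).val = n := rfl
      rw [this, h]
      ring
    · -- Good n (decode w)
      intro k hk
      have hpd := pos_decode w.val w.prop.1 w.prop.2.1
      have hnn := w.prop.2.2.1 ⟨k, Nat.lt_succ_of_le hk⟩
      rw [← hpd] at hnn
      have h1 : (pos (decode w.val) ⟨k, Nat.lt_succ_of_le hk⟩).1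
          = 2 * (cnt Prod.snd (decode w.val) k : ℤ) - k := rfl
      have h2 : (pos (decode w.val) ⟨k, Nat.lt_succ_of_le hk⟩).2
          = (cnt Prod.fst (decode w.val) k : ℤ) - (cnt Prod.snd (decode w.val) k : ℤ) := rfl
      rw [h1, h2] at hnn
      constructor
      · have := hnn.1; push_cast at this ⊢; omega
      · have := hnn.2; push_cast at this ⊢; omega
    · -- end condition
      have hpd := pos_decode w.val w.prop.1 w.prop.2.1
      have hend := w.prop.2.2.2
      rw [← hpd] at hend
      have h2 : (pos (decode w.val) (Fin.last n)).2
          = (cnt Prod.fst (decode w.val) n : ℤ) - (cnt Prod.snd (decode w.val) n : ℤ) := rfl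
      rw [h2] at hend
      omega
  rw [Nat.card_congr E.symm, Nat.card_eq_fintype_card, Fintype.card_subtype]
  rfl

lemma qwalkY_eq (n : ℕ) :
    Nat.card {w : Fin (n + 1) → ℤ × ℤ //
      w 0 = (0, 0) ∧
      (∀ i : Fin n, w i.succ - w i.castSucc ∈
        ({((1:ℤ),(0:ℤ)), (-1,0), (-1,1), (1,-1)} : Set (ℤ × ℤ))) ∧
      (∀ i, 0 ≤ (w i).1 ∧ 0 ≤ (w i).2) ∧
      (w (Fin.last n)).1 = 0} = Y n := by
  have E : {u : Fin n → Bool × Bool // Good n u ∧ 2 * cnt Prod.snd u n = n} ≃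
      {w : Fin (n + 1) → ℤ × ℤ //
      w 0 = (0, 0) ∧
      (∀ i : Fin n, w i.succ - w i.castSucc ∈
        ({((1:ℤ),(0:ℤ)), (-1,0), (-1,1), (1,-1)} : Set (ℤ × ℤ))) ∧
      (∀ i, 0 ≤ (w i).1 ∧ 0 ≤ (w i).2) ∧
      (w (Fin.last n)).1 = 0} := by
    refine ⟨fun u => ⟨pos u.val, pos_zero u.val, fun i => by rw [pos_step]; exact stp_mem _,
        fun i => ?_, ?_⟩,
      fun w => ⟨decode w.val, ?_, ?_⟩, fun u => Subtype.ext (decode_pos u.val),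
      fun w => Subtype.ext (pos_decode w.val w.prop.1 w.prop.2.1)⟩
    · have h := u.prop.1 i.val (by omega : i.val ≤ n)
      show (0:ℤ) ≤ 2 * (cnt Prod.snd u.val i.val : ℤ) - i.val ∧
        (0:ℤ) ≤ (cnt Prod.fst u.val i.val : ℤ) - (cnt Prod.snd u.val i.val : ℤ)
      push_cast
      omega
    · have h := u.prop.2
      show 2 * (cnt Prod.snd u.val (Fin.last n).val : ℤ) - (Fin.last n).val = 0
      have hl : (Fin.last n).val = n := rfl
      rw [hl]
      push_cast
      omega
    · -- Good n (decode w)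
      intro k hk
      have hpd := pos_decode w.val w.prop.1 w.prop.2.1
      have hnn := w.prop.2.2.1 ⟨k, Nat.lt_succ_of_le hk⟩
      rw [← hpd] at hnn
      have h1 : (pos (decode w.val) ⟨k, Nat.lt_succ_of_le hk⟩).1
          = 2 * (cnt Prod.snd (decode w.val) k : ℤ) - k := rfl
      have h2 : (pos (decode w.val) ⟨k, Nat.lt_succ_of_le hk⟩).2
          = (cnt Prod.fst (decode w.val) k : ℤ) - (cnt Prod.snd (decode w.val) k : ℤ) := rfl
      rw [h1, h2] at hnn
      constructor
      · have := hnn.1; push_cast at this ⊢; omega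
      · have := hnn.2; push_cast at this ⊢; omega
    · -- end condition
      have hpd := pos_decode w.val w.prop.1 w.prop.2.1
      have hend := w.prop.2.2.2
      rw [← hpd] at hend
      have h1 : (pos (decode w.val) (Fin.last n)).1
          = 2 * (cnt Prod.snd (decode w.val) n : ℤ) - n := rfl
      rw [h1] at hend
      omega
  rw [Nat.card_congr E.symm, Nat.card_eq_fintype_card, Fintype.card_subtype]
  rfl

end GB

theorem walks_EWNWSE_axes (m : ℕ) :
    qwalkXAxis {(1, 0), (-1, 0), (-1, 1), (1, -1)} (2 * m) =
      qwalkYAxis {(1, 0), (-1, 0), (-1, 1), (1, -1)} (2 * m) ∧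
    qwalkXAxis {(1, 0), (-1, 0), (-1, 1), (1, -1)} (2 * m) *
      (Nat.factorial m * Nat.factorial (m + 1) ^ 2 * Nat.factorial (m + 2)) =
    Nat.factorial (2 * m) * Nat.factorial (2 * m + 2) := by
  have hX : qwalkXAxis {(1, 0), (-1, 0), (-1, 1), (1, -1)} (2 * m) = GB.X (2*m) :=
    GB.qwalkX_eq (2*m)
  have hY : qwalkYAxis {(1, 0), (-1, 0), (-1, 1), (1, -1)} (2 * m) = GB.Y (2*m) :=
    GB.qwalkY_eq (2*m)
  refine ⟨?_, ?_⟩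
  · rw [hX, hY]; exact GB.X_eq_Y m
  · rw [hX]; exact GB.X_mul m
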